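/- Under the interference-alignment hypotheses, let λ be a positive integer with λ ≤ k such that every subset T ⊆ {1,…,k} with |T| = λ satisfies Σ_{i∈T} rowSpace(S_i) = 𝔽^l. Then r^{⌈k/λ⌉} ≤ l²; consequently k ≤ 2λ · log_r(l). -/
import Mathlib

open Module Submodule LinearMap

section Aux

variable {K M : Type*} [Field K] [AddCommGroup M] [Module K M] [FiniteDimensional K M]

lemma aux_sum_finrank_le {ι : Type*} [DecidableEq ι] (s : Finset ι) (B : Submodule K M)
    (Z : ι → Submodule K M) (hZB : ∀ j ∈ s, Z j ≤ B) :
    (∑ j ∈ s, finrank K ↥(Z j)) + finrank K ↥B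
      ≤ s.card * finrank K ↥B + finrank K ↥(B ⊓ s.inf Z) := by
  induction s using Finset.cons_induction with
  | empty => rw [Finset.inf_empty, inf_top_eq]; simp
  | cons a s ha ih =>
      have hZB' : ∀ j ∈ s, Z j ≤ B := fun j hj => hZB j (Finset.mem_cons_of_mem hj)
      have hZa : Z a ≤ B := hZB a (Finset.mem_cons_self a s)
      have h1 : finrank K ↥((Z a) ⊔ (B ⊓ s.inf Z)) + finrank K ↥((Z a) ⊓ (B ⊓ s.inf Z))
          = finrank K ↥(Z a) + finrank K ↥(B ⊓ s.inf Z) :=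
        Submodule.finrank_sup_add_finrank_inf_eq _ _
      have h2 : finrank K ↥((Z a) ⊔ (B ⊓ s.inf Z)) ≤ finrank K ↥B := by
        apply Submodule.finrank_mono
        exact sup_le hZa inf_le_left
      have h3 : B ⊓ (Finset.cons a s ha).inf Z = (Z a) ⊓ (B ⊓ s.inf Z) := by
        rw [Finset.inf_cons, inf_left_comm]
      rw [Finset.sum_cons, Finset.card_cons, h3]
      have h4 : (s.card + 1) * finrank K ↥B = s.card * finrank K ↥B + finrank K ↥B := by ring
      have ih' := ih hZB'
      omega

end Aux

section Defs

variable {𝔽 : Type*} [Field 𝔽] {k r l : ℕ}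

/-- row space of the repair matrix -/
def stmtW (S : Fin k → Matrix (Fin (l / r)) (Fin l) 𝔽) (i : Fin k) :
    Submodule 𝔽 (Fin l → 𝔽) :=
  Submodule.span 𝔽 (Set.range (S i))

/-- algebra of endomorphisms preserving all row spaces indexed by N -/
def stmtB (S : Fin k → Matrix (Fin (l / r)) (Fin l) 𝔽) (N : Finset (Fin k)) :
    Submodule 𝔽 ((Fin l → 𝔽) →ₗ[𝔽] (Fin l → 𝔽)) where
  carrier := {X | ∀ i ∈ N, ∀ v ∈ stmtW S i, X v ∈ stmtW S i}
  add_mem' := by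
    intro X Y hX hY i hi v hv
    simpa using add_mem (hX i hi v hv) (hY i hi v hv)
  zero_mem' := by
    intro i hi v hv
    simp
  smul_mem' := by
    intro c X hX i hi v hv
    simpa using smul_mem _ c (hX i hi v hv)

lemma mem_stmtB {S : Fin k → Matrix (Fin (l / r)) (Fin l) 𝔽} {N : Finset (Fin k)}
    {X : (Fin l → 𝔽) →ₗ[𝔽] (Fin l → 𝔽)} :
    X ∈ stmtB S N ↔ ∀ i ∈ N, ∀ v ∈ stmtW S i, X v ∈ stmtW S i := Iff.rfl

/-- endomorphisms killing the row space of node j -/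
def stmtK (S : Fin k → Matrix (Fin (l / r)) (Fin l) 𝔽) (j : Fin k) :
    Submodule 𝔽 ((Fin l → 𝔽) →ₗ[𝔽] (Fin l → 𝔽)) where
  carrier := {X | ∀ v ∈ stmtW S j, X v = 0}
  add_mem' := by
    intro X Y hX hY v hv
    simp [hX v hv, hY v hv]
  zero_mem' := by intro v hv; simp
  smul_mem' := by
    intro c X hX v hv
    simp [hX v hv]

lemma mem_stmtK {S : Fin k → Matrix (Fin (l / r)) (Fin l) 𝔽} {j : Fin k}
    {X : (Fin l → 𝔽) →ₗ[𝔽] (Fin l → 𝔽)} :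
    X ∈ stmtK S j ↔ ∀ v ∈ stmtW S j, X v = 0 := Iff.rfl

lemma span_range_mul {m : ℕ} (S0 : Matrix (Fin m) (Fin l) 𝔽) (Cm : Matrix (Fin l) (Fin l) 𝔽) :
    Submodule.span 𝔽 (Set.range (S0 * Cm))
      = (Submodule.span 𝔽 (Set.range S0)).map Cm.vecMulLinear := by
  have h : (S0 * Cm) = fun a => Cm.vecMulLinear (S0 a) := by
    funext a j
    simp [Matrix.mul_apply, Matrix.vecMul, dotProduct, Matrix.vecMulLinear]
  rw [Submodule.map_span, h]
  congr 1
  exact Set.range_comp _ S0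

end Defs
section MainStep

variable {𝔽 : Type*} [Field 𝔽] {k r l : ℕ}

set_option maxHeartbeats 1600000 in
set_option synthInstance.maxHeartbeats 400000 in
lemma main_step (hl : 0 < l)
    (S : Fin k → Matrix (Fin (l / r)) (Fin l) 𝔽)
    (C : Fin r → Fin k → Matrix (Fin l) (Fin l) 𝔽)
    (u0 : Fin r)
    (hCinv : ∀ u j, IsUnit (C u j))
    (hC1 : ∀ j, C u0 j = 1)
    (hIA1 : ∀ (i j : Fin k), j ≠ i → ∀ u : Fin r,
      Submodule.span 𝔽 (Set.range (S i * C u j)) = Submodule.span 𝔽 (Set.range (S i)))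
    (hIA2 : ∀ i : Fin k, iSupIndep
      fun u : Fin r => Submodule.span 𝔽 (Set.range (S i * C u i)))
    (N G : Finset (Fin k)) (hdisj : Disjoint N G)
    (hG : (⨆ j ∈ G, stmtW S j) = ⊤) :
    r * finrank 𝔽 ↥(stmtB S (N ∪ G)) ≤ finrank 𝔽 ↥(stmtB S N) := by
  classical
  rcases Nat.eq_zero_or_pos r with hr0 | hr0
  · subst hr0
    simp
  let Φ : Fin r → Fin k → ((Fin l → 𝔽) →ₗ[𝔽] (Fin l → 𝔽)) := fun u j => (C u j).vecMulLinear
  have hmap : ∀ (u : Fin r) (j i : Fin k),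
      (stmtW S i).map (Φ u j) = Submodule.span 𝔽 (Set.range (S i * C u j)) :=
    fun u j i => (span_range_mul (S i) (C u j)).symm
  have hWinv : ∀ (i j : Fin k), j ≠ i → ∀ (u : Fin r), ∀ v ∈ stmtW S i,
      Φ u j v ∈ stmtW S i := by
    intro i j hji u v hv
    have h1 : Φ u j v ∈ (stmtW S i).map (Φ u j) := Submodule.mem_map_of_mem hv
    rw [hmap, hIA1 i j hji u] at h1
    exact h1
  have hΦinj : ∀ (u : Fin r) (j : Fin k), Function.Injective (Φ u j) := by
    intro u j
    obtain ⟨Cu, hCu⟩ := hCinv u j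
    have key : ∀ v : Fin l → 𝔽,
        Matrix.vecMul (Matrix.vecMul v (C u j)) (↑Cu⁻¹ : Matrix (Fin l) (Fin l) 𝔽) = v := by
      intro v
      rw [Matrix.vecMul_vecMul, ← hCu, Units.mul_inv, Matrix.vecMul_one]
    intro a b hab
    have hab' : Matrix.vecMul a (C u j) = Matrix.vecMul b (C u j) := hab
    rw [← key a, ← key b, hab']
  have hWcomp : ∀ j : Fin k, Submodule.span 𝔽 (Set.range (S j * C u0 j)) = stmtW S j := by
    intro j
    rw [hC1 j, Matrix.mul_one]
    rfl
  have hmemsup : ∀ (jj : Fin k) (w ue : Fin r), w ≠ ue → ∀ x : Fin l → 𝔽,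
      x ∈ Submodule.span 𝔽 (Set.range (S jj * C w jj)) →
      x ∈ ⨆ v : Fin r, ⨆ (_ : v ≠ ue), Submodule.span 𝔽 (Set.range (S jj * C v jj)) :=
    fun jj w ue hne x hx => Submodule.mem_iSup_of_mem w (Submodule.mem_iSup_of_mem hne hx)
  let ιp : Type _ := {j : Fin k // j ∈ G} × {u : Fin r // u ≠ u0}
  -- composition maps  X ↦ Φ ∘ X
  let Mlin : ιp → (((Fin l → 𝔽) →ₗ[𝔽] (Fin l → 𝔽)) →ₗ[𝔽] ((Fin l → 𝔽) →ₗ[𝔽] (Fin l → 𝔽))) :=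
    fun p => LinearMap.llcomp 𝔽 (Fin l → 𝔽) (Fin l → 𝔽) (Fin l → 𝔽) (Φ p.2.1 p.1.1)
  have hMapp : ∀ (p : ιp) (X : (Fin l → 𝔽) →ₗ[𝔽] (Fin l → 𝔽)) (v : Fin l → 𝔽),
      Mlin p X v = Φ p.2.1 p.1.1 (X v) := fun p X v => rfl
  have hMinj : ∀ p : ιp, Function.Injective (Mlin p) := by
    intro p X Y hXY
    apply LinearMap.ext
    intro v
    apply hΦinj p.2.1 p.1.1
    have := congrArg (fun (g : (Fin l → 𝔽) →ₗ[𝔽] (Fin l → 𝔽)) => g v) hXY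
    simpa [hMapp] using this
  -- node-indexed "killer" subspaces of the algebra
  let Zfam : Fin k → Submodule 𝔽 ((Fin l → 𝔽) →ₗ[𝔽] (Fin l → 𝔽)) :=
    fun j => stmtB S (N ∪ G) ⊓ stmtK S j
  let Mfun : ιp → Submodule 𝔽 ((Fin l → 𝔽) →ₗ[𝔽] (Fin l → 𝔽)) :=
    fun p => (stmtB S (N ∪ G)).map (Mlin p)
  -- decomposition of membership in partial sups
  have mem_decomp : ∀ s : Finset ιp, ∀ Y ∈ (stmtB S (N ∪ G) ⊔ s.sup Mfun),
      ∃ X0 ∈ stmtB S (N ∪ G), ∃ f : ιp → ((Fin l → 𝔽) →ₗ[𝔽] (Fin l → 𝔽)),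
        (∀ q, f q ∈ stmtB S (N ∪ G)) ∧ Y = X0 + ∑ q ∈ s, (Mlin q) (f q) := by
    intro s
    induction s using Finset.cons_induction with
    | empty =>
        intro Y hY
        rw [Finset.sup_empty, sup_bot_eq] at hY
        exact ⟨Y, hY, 0, fun q => Submodule.zero_mem _, by simp⟩
    | cons a s ha ih =>
        intro Y hY
        rw [Finset.sup_cons, sup_left_comm] at hY
        obtain ⟨Y2, hY2, Y1, hY1, hYsum⟩ := Submodule.mem_sup.mp hY
        obtain ⟨Xa, hXa, hXaeq⟩ := Submodule.mem_map.mp hY2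
        obtain ⟨X0, hX0, f, hf, hfeq⟩ := ih Y1 hY1
        refine ⟨X0, hX0, fun q => if q = a then Xa else f q, ?_, ?_⟩
        · intro q
          by_cases hq : q = a <;> simp [hq, hXa, hf q]
        · rw [Finset.sum_cons]
          have hsc : ∀ q ∈ s, (Mlin q) (if q = a then Xa else f q) = (Mlin q) (f q) := by
            intro q hq
            have : q ≠ a := fun h => ha (h ▸ hq)
            simp [this]
          rw [Finset.sum_congr rfl hsc]
          simp only [eq_self_iff_true, if_true]
          rw [← hYsum, hfeq, ← hXaeq]
          abel
  -- key interference-alignment step: new images intersect previous sums only in killers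
  have hint : ∀ (s : Finset ιp) (p : ιp), p ∉ s →
      ∀ Y ∈ Mfun p, Y ∈ (stmtB S (N ∪ G) ⊔ s.sup Mfun) →
        Y ∈ (Zfam p.1.1).map (Mlin p) := by
    intro s p hps Y hY1 hY2
    obtain ⟨X, hXB, rfl⟩ := Submodule.mem_map.mp hY1
    obtain ⟨X0, hX0, f, hf, hfeq⟩ := mem_decomp s _ hY2
    have hkill : ∀ v ∈ stmtW S p.1.1, X v = 0 := by
      intro v hv
      have hj0mem : p.1.1 ∈ N ∪ G := Finset.mem_union_right _ p.1.2
      have hTv : Φ p.2.1 p.1.1 (X v) = X0 v + ∑ q ∈ s, Φ q.2.1 q.1.1 (f q v) := by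
        have h0 := congrArg (fun (g : (Fin l → 𝔽) →ₗ[𝔽] (Fin l → 𝔽)) => g v) hfeq
        simpa only [LinearMap.add_apply, LinearMap.sum_apply, hMapp] using h0
      have hT1 : Φ p.2.1 p.1.1 (X v)
          ∈ Submodule.span 𝔽 (Set.range (S p.1.1 * C p.2.1 p.1.1)) := by
        rw [← hmap]
        exact Submodule.mem_map_of_mem (hXB p.1.1 hj0mem v hv)
      have hT2 : Φ p.2.1 p.1.1 (X v)
          ∈ ⨆ w : Fin r, ⨆ (_ : w ≠ p.2.1),
              Submodule.span 𝔽 (Set.range (S p.1.1 * C w p.1.1)) := by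
        rw [hTv]
        apply Submodule.add_mem
        · apply hmemsup p.1.1 u0 p.2.1 (Ne.symm p.2.2)
          rw [hWcomp p.1.1]
          exact hX0 p.1.1 hj0mem v hv
        · apply Submodule.sum_mem
          intro q hq
          have hfqv : f q v ∈ stmtW S p.1.1 := hf q p.1.1 hj0mem v hv
          by_cases hjj : q.1.1 = p.1.1
          · have hu : q.2.1 ≠ p.2.1 := by
              intro h
              have : q = p := Prod.ext (Subtype.ext hjj) (Subtype.ext h)
              exact hps (this ▸ hq)
            rw [hjj]
            apply hmemsup p.1.1 q.2.1 p.2.1 hu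
            rw [← hmap]
            exact Submodule.mem_map_of_mem hfqv
          · apply hmemsup p.1.1 u0 p.2.1 (Ne.symm p.2.2)
            rw [hWcomp p.1.1]
            exact hWinv p.1.1 q.1.1 hjj q.2.1 _ hfqv
      have hT0 : Φ p.2.1 p.1.1 (X v) = 0 :=
        Submodule.disjoint_def.mp (hIA2 p.1.1 p.2.1) _ hT1 hT2
      exact hΦinj p.2.1 p.1.1 (by rw [hT0, map_zero])
    exact Submodule.mem_map_of_mem (Submodule.mem_inf.mpr ⟨hXB, hkill⟩)
  -- dimension doubling by induction on the finset of pairs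
  have hMdim : ∀ p : ιp, finrank 𝔽 ↥(Mfun p) = finrank 𝔽 ↥(stmtB S (N ∪ G)) :=
    fun p => (LinearEquiv.finrank_eq
      (Submodule.equivMapOfInjective (Mlin p) (hMinj p) (stmtB S (N ∪ G)))).symm
  have hdim : ∀ s : Finset ιp,
      finrank 𝔽 ↥(stmtB S (N ∪ G)) + s.card * finrank 𝔽 ↥(stmtB S (N ∪ G))
        ≤ finrank 𝔽 ↥(stmtB S (N ∪ G) ⊔ s.sup Mfun) + ∑ q ∈ s, finrank 𝔽 ↥(Zfam q.1.1) := by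
    intro s
    induction s using Finset.cons_induction with
    | empty =>
        rw [Finset.sup_empty, sup_bot_eq]
        simp
    | cons a s ha ih =>
        have hsupeq : stmtB S (N ∪ G) ⊔ (Finset.cons a s ha).sup Mfun
            = (Mfun a) ⊔ (stmtB S (N ∪ G) ⊔ s.sup Mfun) := by
          rw [Finset.sup_cons, sup_left_comm]
        have e1 : finrank 𝔽 ↥((Mfun a) ⊔ (stmtB S (N ∪ G) ⊔ s.sup Mfun))
              + finrank 𝔽 ↥((Mfun a) ⊓ (stmtB S (N ∪ G) ⊔ s.sup Mfun))
            = finrank 𝔽 ↥(Mfun a) + finrank 𝔽 ↥(stmtB S (N ∪ G) ⊔ s.sup Mfun) :=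
          Submodule.finrank_sup_add_finrank_inf_eq _ _
        have e2 : finrank 𝔽 ↥((Mfun a) ⊓ (stmtB S (N ∪ G) ⊔ s.sup Mfun))
            ≤ finrank 𝔽 ↥(Zfam a.1.1) := by
          have hle : (Mfun a) ⊓ (stmtB S (N ∪ G) ⊔ s.sup Mfun)
              ≤ (Zfam a.1.1).map (Mlin a) := by
            intro Y hY
            exact hint s a ha Y (Submodule.mem_inf.mp hY).1 (Submodule.mem_inf.mp hY).2
          calc finrank 𝔽 ↥((Mfun a) ⊓ (stmtB S (N ∪ G) ⊔ s.sup Mfun))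
              ≤ finrank 𝔽 ↥((Zfam a.1.1).map (Mlin a)) := Submodule.finrank_mono hle
            _ ≤ finrank 𝔽 ↥(Zfam a.1.1) := Submodule.finrank_map_le _ _
        have e3 := hMdim a
        rw [e3] at e1
        rw [hsupeq, Finset.sum_cons, Finset.card_cons]
        have hc : (s.card + 1) * finrank 𝔽 ↥(stmtB S (N ∪ G))
            = s.card * finrank 𝔽 ↥(stmtB S (N ∪ G)) + finrank 𝔽 ↥(stmtB S (N ∪ G)) := by
          ring
        rw [hc]
        have key : ∀ (b P z sz t tm ta : ℕ), tm + t = b + ta → t ≤ z → b + P ≤ ta + sz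
            → b + (P + b) ≤ tm + (z + sz) := by
          intro b P z sz t tm ta h1 h2 h3
          omega
        exact key _ _ _ _ _ _ _ e1 e2 ih
  -- global bound : everything lands in stmtB S N
  have hTle : stmtB S (N ∪ G) ⊔ (Finset.univ : Finset ιp).sup Mfun ≤ stmtB S N := by
    apply sup_le
    · intro X hX
      rw [mem_stmtB]
      intro i hi v hv
      exact hX i (Finset.mem_union_left _ hi) v hv
    · apply Finset.sup_le
      intro p _
      rintro Y ⟨X, hX, rfl⟩
      rw [mem_stmtB]
      intro i hi v hv
      have hne : p.1.1 ≠ i := fun h => (Finset.disjoint_left.mp hdisj hi) (h ▸ p.1.2)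
      have h1 : (Mlin p) X v = Φ p.2.1 p.1.1 (X v) := hMapp p X v
      rw [h1]
      exact hWinv i p.1.1 hne p.2.1 _ (hX i (Finset.mem_union_left _ hi) v hv)
  have hglobal : finrank 𝔽 ↥(stmtB S (N ∪ G) ⊔ (Finset.univ : Finset ιp).sup Mfun)
      ≤ finrank 𝔽 ↥(stmtB S N) := Submodule.finrank_mono hTle
  -- spanning forces the killers to intersect trivially
  have hZinf : G.inf Zfam = ⊥ := by
    rw [eq_bot_iff]
    intro X hX
    have hXz : ∀ j ∈ G, ∀ v ∈ stmtW S j, X v = 0 := by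
      intro j hj
      have hle : G.inf Zfam ≤ Zfam j := Finset.inf_le hj
      exact fun v hv => (Submodule.mem_inf.mp (SetLike.le_def.mp hle hX)).2 v hv
    have hkerX : (⨆ j ∈ G, stmtW S j) ≤ LinearMap.ker X := by
      apply iSup₂_le
      intro j hj v hv
      exact LinearMap.mem_ker.mpr (hXz j hj v hv)
    rw [hG, top_le_iff] at hkerX
    exact (Submodule.mem_bot 𝔽).mpr (LinearMap.ker_eq_top.mp hkerX)
  have hsum0 := aux_sum_finrank_le G (stmtB S (N ∪ G)) Zfam (fun j _ => inf_le_left)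
  rw [hZinf, inf_bot_eq, finrank_bot, add_zero] at hsum0
  -- cardinalities
  have hcardU : Fintype.card {u : Fin r // u ≠ u0} = r - 1 := by
    have h1 : Fintype.card {u : Fin r // u ≠ u0}
        = Fintype.card (Fin r) - Fintype.card {u : Fin r // u = u0} :=
      Fintype.card_subtype_compl _
    rw [h1, Fintype.card_subtype_eq, Fintype.card_fin]
  have hcard : (Finset.univ : Finset ιp).card = G.card * (r - 1) := by
    rw [Finset.card_univ, Fintype.card_prod, Fintype.card_coe, hcardU]
  have hzsplit : ∑ q ∈ (Finset.univ : Finset ιp), finrank 𝔽 ↥(Zfam q.1.1)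
      = (r - 1) * ∑ j ∈ G, finrank 𝔽 ↥(Zfam j) := by
    rw [Fintype.sum_prod_type]
    have hinner : ∀ a : {j : Fin k // j ∈ G},
        (∑ _b : {u : Fin r // u ≠ u0}, finrank 𝔽 ↥(Zfam a.1))
          = (r - 1) * finrank 𝔽 ↥(Zfam a.1) := by
      intro a
      rw [Finset.sum_const, smul_eq_mul, Finset.card_univ, hcardU]
    rw [Finset.sum_congr rfl (fun a _ => hinner a), ← Finset.mul_sum]
    congr 1
    exact Finset.sum_coe_sort G (fun j => finrank 𝔽 ↥(Zfam j))
  have hmain := hdim Finset.univ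
  rw [hcard, hzsplit] at hmain
  -- arithmetic finish
  have h2 : (r - 1) * (∑ j ∈ G, finrank 𝔽 ↥(Zfam j))
        + (r - 1) * finrank 𝔽 ↥(stmtB S (N ∪ G))
      ≤ (G.card * (r - 1)) * finrank 𝔽 ↥(stmtB S (N ∪ G)) := by
    have h3 := Nat.mul_le_mul_left (r - 1) hsum0
    rw [Nat.mul_add] at h3
    calc (r - 1) * (∑ j ∈ G, finrank 𝔽 ↥(Zfam j))
          + (r - 1) * finrank 𝔽 ↥(stmtB S (N ∪ G))
        ≤ (r - 1) * (G.card * finrank 𝔽 ↥(stmtB S (N ∪ G))) := h3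
      _ = (G.card * (r - 1)) * finrank 𝔽 ↥(stmtB S (N ∪ G)) := by ring
  have key2 : ∀ (b P A zz T bN : ℕ), b + P ≤ T + zz → T ≤ bN → zz + A ≤ P
      → b + A ≤ bN := by
    intro b P A zz T bN h1' h2' h3'
    omega
  have h3 : finrank 𝔽 ↥(stmtB S (N ∪ G)) + (r - 1) * finrank 𝔽 ↥(stmtB S (N ∪ G))
      ≤ finrank 𝔽 ↥(stmtB S N) := key2 _ _ _ _ _ _ hmain hglobal h2
  have h4 : r * finrank 𝔽 ↥(stmtB S (N ∪ G))
      = finrank 𝔽 ↥(stmtB S (N ∪ G)) + (r - 1) * finrank 𝔽 ↥(stmtB S (N ∪ G)) := by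
    have h5 : r - 1 + 1 = r := by omega
    calc r * finrank 𝔽 ↥(stmtB S (N ∪ G))
        = ((r - 1) + 1) * finrank 𝔽 ↥(stmtB S (N ∪ G)) := by rw [h5]
      _ = finrank 𝔽 ↥(stmtB S (N ∪ G)) + (r - 1) * finrank 𝔽 ↥(stmtB S (N ∪ G)) := by
          ring
  rw [h4]
  exact h3

end MainStep
set_option maxHeartbeats 1600000 in
set_option synthInstance.maxHeartbeats 400000 in
theorem stmt_9 {𝔽 : Type*} [Field 𝔽] (k r l : ℕ)
    (hk : 0 < k) (hr : 2 ≤ r) (hl : 0 < l) (hrl : r ∣ l)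
    (S : Fin k → Matrix (Fin (l / r)) (Fin l) 𝔽)
    (C : Fin r → Fin k → Matrix (Fin l) (Fin l) 𝔽)
    (hCinv : ∀ u j, IsUnit (C u j))
    (hC1 : ∀ j, C ⟨0, by omega⟩ j = 1)
    (hIA1 : ∀ (i j : Fin k), j ≠ i → ∀ u : Fin r,
      Submodule.span 𝔽 (Set.range (S i * C u j)) = Submodule.span 𝔽 (Set.range (S i)))
    (hIA2 : ∀ i : Fin k, iSupIndep
      fun u : Fin r => Submodule.span 𝔽 (Set.range (S i * C u i)))
    (hIA3 : ∀ i : Fin k,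
      (⨆ u : Fin r, Submodule.span 𝔽 (Set.range (S i * C u i))) = ⊤)
    (lam : ℕ) (hlam : 0 < lam) (hlamk : lam ≤ k)
    (hspan : ∀ T : Finset (Fin k), T.card = lam →
      (⨆ i ∈ T, Submodule.span 𝔽 (Set.range (S i))) = ⊤) :
    r ^ (k ⌈/⌉ lam) ≤ l ^ 2 ∧ (k : ℝ) ≤ 2 * lam * Real.logb r l := by
  classical
  have hone : (0:ℕ) < r := by omega
  have hC1' : ∀ j, C ⟨0, hone⟩ j = 1 := hC1
  set u0 : Fin r := ⟨0, hone⟩ with hu0def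
  set m' := k / lam with hm'def
  have hdm : lam * m' + k % lam = k := Nat.div_add_mod k lam
  have hmod : k % lam < lam := Nat.mod_lt k hlam
  -- the groups of nodes
  have hNbd : ∀ t : ℕ, ∀ m ∈ (Finset.range (t * lam)).filter (· < k), m < k := by
    intro t m hm
    simp only [Finset.mem_filter] at hm
    exact hm.2
  have hGbd : ∀ t : ℕ, ∀ m ∈ (Finset.Ico (t * lam) ((t + 1) * lam)).filter (· < k), m < k := by
    intro t m hm
    simp only [Finset.mem_filter] at hm
    exact hm.2
  let Nt : ℕ → Finset (Fin k) := fun t =>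
    ((Finset.range (t * lam)).filter (· < k)).attachFin (hNbd t)
  let Gt : ℕ → Finset (Fin k) := fun t =>
    ((Finset.Ico (t * lam) ((t + 1) * lam)).filter (· < k)).attachFin (hGbd t)
  have hmemN : ∀ (t : ℕ) (a : Fin k), a ∈ Nt t ↔ (a : ℕ) < t * lam := by
    intro t a
    simp [Nt, Finset.mem_attachFin, Finset.mem_filter, Finset.mem_range, a.is_lt]
  have hmemG : ∀ (t : ℕ) (a : Fin k),
      a ∈ Gt t ↔ (t * lam ≤ (a : ℕ) ∧ (a : ℕ) < (t + 1) * lam) := by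
    intro t a
    simp [Gt, Finset.mem_attachFin, Finset.mem_filter, Finset.mem_Ico, a.is_lt]
  have hunion : ∀ t : ℕ, Nt t ∪ Gt t = Nt (t + 1) := by
    intro t
    ext a
    have hmul : (t + 1) * lam = t * lam + lam := by ring
    simp only [Finset.mem_union, hmemN, hmemG]
    omega
  have hdisjNG : ∀ t : ℕ, Disjoint (Nt t) (Gt t) := by
    intro t
    rw [Finset.disjoint_left]
    intro a haN haG
    rw [hmemN] at haN
    rw [hmemG] at haG
    omega
  have hcardG : ∀ t : ℕ, t < m' → (Gt t).card = lam := by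
    intro t ht
    have h2 : (t + 1) * lam ≤ m' * lam := Nat.mul_le_mul_right _ ht
    have h3 : m' * lam ≤ k := by
      rw [hm'def]
      exact Nat.div_mul_le_self k lam
    have hfil : (Finset.Ico (t * lam) ((t + 1) * lam)).filter (· < k)
        = Finset.Ico (t * lam) ((t + 1) * lam) := by
      apply Finset.filter_true_of_mem
      intro x hx
      rw [Finset.mem_Ico] at hx
      omega
    have hmul : (t + 1) * lam = t * lam + lam := by ring
    simp only [Gt, Finset.card_attachFin, hfil, Nat.card_Ico]
    omega
  have hspanG : ∀ t : ℕ, t < m' → (⨆ j ∈ Gt t, stmtW S j) = ⊤ := by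
    intro t ht
    exact hspan (Gt t) (hcardG t ht)
  -- base of the chain
  have hN0 : Nt 0 = ∅ := by
    apply Finset.eq_empty_of_forall_notMem
    intro a ha
    rw [hmemN] at ha
    have : (0 : ℕ) * lam = 0 := by ring
    omega
  have hBtop : stmtB S (Nt 0) = ⊤ := by
    rw [hN0, eq_top_iff]
    intro X _
    rw [mem_stmtB]
    intro i hi
    exact (Finset.notMem_empty i hi).elim
  have hV : finrank 𝔽 (Fin l → 𝔽) = l := by
    rw [Module.finrank_pi, Fintype.card_fin]
  have hE : finrank 𝔽 ((Fin l → 𝔽) →ₗ[𝔽] (Fin l → 𝔽)) = l * l := by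
    rw [Module.finrank_linearMap, hV]
  have hB0 : finrank 𝔽 ↥(stmtB S (Nt 0)) = l * l := by
    rw [hBtop, finrank_top, hE]
  -- the chain of dimension bounds
  have chain : ∀ t : ℕ, t ≤ m' → r ^ t * finrank 𝔽 ↥(stmtB S (Nt t)) ≤ l * l := by
    intro t
    induction t with
    | zero =>
        intro _
        simp [hB0]
    | succ t ih =>
        intro ht
        have ht' : t < m' := ht
        have hstep := main_step hl S C u0 hCinv hC1' hIA1 hIA2 (Nt t) (Gt t)
          (hdisjNG t) (hspanG t ht')
        rw [hunion t] at hstep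
        calc r ^ (t + 1) * finrank 𝔽 ↥(stmtB S (Nt (t + 1)))
            = r ^ t * (r * finrank 𝔽 ↥(stmtB S (Nt (t + 1)))) := by ring
          _ ≤ r ^ t * finrank 𝔽 ↥(stmtB S (Nt t)) := Nat.mul_le_mul_left _ hstep
          _ ≤ l * l := ih (by omega)
  have hceil : k ⌈/⌉ lam = (k + lam - 1) / lam := Nat.ceilDiv_eq_add_pred_div k lam
  -- injectivity of the maps v ↦ v * C u j
  have hΦinj : ∀ (u : Fin r) (j : Fin k), Function.Injective ((C u j).vecMulLinear) := by
    intro u j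
    obtain ⟨Cu, hCu⟩ := hCinv u j
    have key : ∀ v : Fin l → 𝔽,
        Matrix.vecMul (Matrix.vecMul v (C u j)) (↑Cu⁻¹ : Matrix (Fin l) (Fin l) 𝔽) = v := by
      intro v
      rw [Matrix.vecMul_vecMul, ← hCu, Units.mul_inv, Matrix.vecMul_one]
    intro a b hab
    have hab' : Matrix.vecMul a (C u j) = Matrix.vecMul b (C u j) := hab
    rw [← key a, ← key b, hab']
  -- the natural-number power bound
  have hpow : r ^ (k ⌈/⌉ lam) ≤ l ^ 2 := by
    rw [pow_two]
    by_cases hdvd : k % lam = 0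
    · have hcEq : k ⌈/⌉ lam = m' := by
        rw [hceil]
        have he : k + lam - 1 = (lam - 1) + lam * m' := by omega
        rw [he, Nat.add_mul_div_left _ _ hlam, Nat.div_eq_of_lt (by omega)]
        omega
      rw [hcEq]
      -- the algebra is nonzero since it contains the identity
      have hid : LinearMap.id ∈ stmtB S (Nt m') := by
        rw [mem_stmtB]
        intro i hi v hv
        simpa using hv
      have hBne : finrank 𝔽 ↥(stmtB S (Nt m')) ≠ 0 := by
        intro h0
        rw [Submodule.finrank_eq_zero] at h0
        rw [h0] at hid
        have hid0 : (LinearMap.id : (Fin l → 𝔽) →ₗ[𝔽] (Fin l → 𝔽)) = 0 :=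
          (Submodule.mem_bot 𝔽).mp hid
        have h1 : (fun _ : Fin l => (1 : 𝔽)) = (0 : Fin l → 𝔽) := by
          have h2 := congrArg
            (fun (g : (Fin l → 𝔽) →ₗ[𝔽] (Fin l → 𝔽)) => g (fun _ => (1 : 𝔽))) hid0
          simpa using h2
        exact one_ne_zero (congrFun h1 ⟨0, hl⟩)
      calc r ^ m' = r ^ m' * 1 := by ring
        _ ≤ r ^ m' * finrank 𝔽 ↥(stmtB S (Nt m')) := Nat.mul_le_mul_left _ (by omega)
        _ ≤ l * l := chain m' le_rfl
    · have hcEq : k ⌈/⌉ lam = m' + 1 := by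
        rw [hceil]
        have hmul2 : lam * (m' + 1) = lam * m' + lam := by ring
        have he : k + lam - 1 = (k % lam - 1) + lam * (m' + 1) := by omega
        rw [he, Nat.add_mul_div_left _ _ hlam, Nat.div_eq_of_lt (by omega)]
        omega
      rw [hcEq]
      -- the leftover node j0
      have hj0lt : m' * lam < k := by
        have : m' * lam = lam * m' := Nat.mul_comm _ _
        omega
      set j0 : Fin k := ⟨m' * lam, hj0lt⟩ with hj0def
      have hj0val : (j0 : ℕ) = m' * lam := rfl
      have hj0notin : j0 ∉ Nt m' := by
        intro h
        rw [hmemN] at h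
        omega
      have hmemΦ : ∀ u : Fin r, (C u j0).vecMulLinear ∈ stmtB S (Nt m') := by
        intro u
        rw [mem_stmtB]
        intro i hi v hv
        have hne : j0 ≠ i := by
          intro h
          rw [← h, hmemN, hj0val] at hi
          omega
        have hmap2 : (stmtW S i).map ((C u j0).vecMulLinear)
            = Submodule.span 𝔽 (Set.range (S i * C u j0)) :=
          (span_range_mul (S i) (C u j0)).symm
        have h1 : (C u j0).vecMulLinear v ∈ (stmtW S i).map ((C u j0).vecMulLinear) :=
          Submodule.mem_map_of_mem hv
        rw [hmap2, hIA1 i j0 hne u] at h1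
        exact h1
      -- linear independence of the r encoding maps
      have hlin : LinearIndependent 𝔽
          (fun u : Fin r => ((C u j0).vecMulLinear : (Fin l → 𝔽) →ₗ[𝔽] (Fin l → 𝔽))) := by
        rw [Fintype.linearIndependent_iff]
        intro g hg u
        by_contra hgu
        have hWz : ∀ v ∈ stmtW S j0, v = 0 := by
          intro v hv
          have hgv : ∑ w : Fin r, g w • (C w j0).vecMulLinear v = 0 := by
            have h3 := congrArg
              (fun (X : (Fin l → 𝔽) →ₗ[𝔽] (Fin l → 𝔽)) => X v) hg
            simpa only [LinearMap.sum_apply, LinearMap.smul_apply, LinearMap.zero_apply]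
              using h3
          rw [← Finset.add_sum_erase Finset.univ _ (Finset.mem_univ u)] at hgv
          have hTeq : g u • (C u j0).vecMulLinear v
              = -(∑ w ∈ Finset.univ.erase u, g w • (C w j0).vecMulLinear v) :=
            eq_neg_of_add_eq_zero_left hgv
          have hT1 : g u • (C u j0).vecMulLinear v
              ∈ Submodule.span 𝔽 (Set.range (S j0 * C u j0)) := by
            apply Submodule.smul_mem
            rw [span_range_mul]
            exact Submodule.mem_map_of_mem hv
          have hT2 : g u • (C u j0).vecMulLinear v
              ∈ ⨆ w : Fin r, ⨆ (_ : w ≠ u),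
                  Submodule.span 𝔽 (Set.range (S j0 * C w j0)) := by
            rw [hTeq]
            apply neg_mem
            apply Submodule.sum_mem
            intro w hw
            have hwne : w ≠ u := (Finset.mem_erase.mp hw).1
            apply Submodule.mem_iSup_of_mem w
            apply Submodule.mem_iSup_of_mem hwne
            apply Submodule.smul_mem
            rw [span_range_mul]
            exact Submodule.mem_map_of_mem hv
          have hT0 : g u • (C u j0).vecMulLinear v = 0 :=
            Submodule.disjoint_def.mp (hIA2 j0 u) _ hT1 hT2
          rcases smul_eq_zero.mp hT0 with h | h
          · exact absurd h hgu
          · exact hΦinj u j0 (by rw [h, map_zero])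
        have hWbot : stmtW S j0 = ⊥ := by
          rw [eq_bot_iff]
          intro v hv
          exact (Submodule.mem_bot 𝔽).mpr (hWz v hv)
        have hDbot : ∀ u' : Fin r,
            Submodule.span 𝔽 (Set.range (S j0 * C u' j0)) = ⊥ := by
          intro u'
          rw [span_range_mul]
          rw [show Submodule.span 𝔽 (Set.range (S j0)) = stmtW S j0 from rfl, hWbot,
            Submodule.map_bot]
        have htop := hIA3 j0
        haveI : Nonempty (Fin r) := ⟨u0⟩
        simp only [hDbot, iSup_const] at htop
        have hv1 : (fun _ : Fin l => (1 : 𝔽)) ∈ (⊥ : Submodule 𝔽 (Fin l → 𝔽)) := by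
          rw [htop]
          trivial
        have hv2 := (Submodule.mem_bot 𝔽).mp hv1
        exact one_ne_zero (congrFun hv2 ⟨0, hl⟩)
      have hrle : r ≤ finrank 𝔽 ↥(stmtB S (Nt m')) := by
        have hsple : Submodule.span 𝔽 (Set.range (fun u : Fin r =>
            ((C u j0).vecMulLinear : (Fin l → 𝔽) →ₗ[𝔽] (Fin l → 𝔽)))) ≤ stmtB S (Nt m') := by
          rw [Submodule.span_le]
          rintro _ ⟨u, rfl⟩
          exact hmemΦ u
        have h4 : finrank 𝔽 ↥(Submodule.span 𝔽 (Set.range (fun u : Fin r =>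
            ((C u j0).vecMulLinear : (Fin l → 𝔽) →ₗ[𝔽] (Fin l → 𝔽))))) = r := by
          rw [finrank_span_eq_card hlin, Fintype.card_fin]
        have h5 := Submodule.finrank_mono hsple
        omega
      calc r ^ (m' + 1) = r ^ m' * r := by ring
        _ ≤ r ^ m' * finrank 𝔽 ↥(stmtB S (Nt m')) := Nat.mul_le_mul_left _ hrle
        _ ≤ l * l := chain m' le_rfl
  refine ⟨hpow, ?_⟩
  -- the real logarithmic bound
  have hkc : k ≤ lam * (k ⌈/⌉ lam) := by
    have h1 := le_smul_ceilDiv (b := k) hlam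
    simpa [smul_eq_mul] using h1
  have hr1 : (1 : ℝ) < (r : ℝ) := by
    exact_mod_cast (by omega : 1 < r)
  have hcast : ((r : ℝ)) ^ (k ⌈/⌉ lam) ≤ (l : ℝ) ^ 2 := by exact_mod_cast hpow
  have hlog : (↑(k ⌈/⌉ lam) : ℝ) * Real.log r ≤ 2 * Real.log l := by
    have h1 := Real.log_le_log (by positivity) hcast
    rw [Real.log_pow, Real.log_pow] at h1
    push_cast at h1
    exact h1
  have hlogr : 0 < Real.log r := Real.log_pos hr1
  have hcle : (↑(k ⌈/⌉ lam) : ℝ) ≤ 2 * Real.logb r l := by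
    calc (↑(k ⌈/⌉ lam) : ℝ) ≤ (2 * Real.log l) / Real.log r :=
          (le_div_iff₀ hlogr).mpr hlog
      _ = 2 * (Real.log l / Real.log r) := by ring
      _ = 2 * Real.logb r l := by rw [Real.log_div_log]
  calc (k : ℝ) ≤ (lam : ℝ) * (↑(k ⌈/⌉ lam) : ℝ) := by exact_mod_cast hkc
    _ ≤ (lam : ℝ) * (2 * Real.logb r l) :=
        mul_le_mul_of_nonneg_left hcle (by positivity)
    _ = 2 * lam * Real.logb r l := by ring
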